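/- Let λ : ℝ → ℝ₊ be a non-increasing, convex, positive function and let ℓ ≤ k be positive integers. Then there exists exactly one real number x ≤ k satisfying (k − x)·λ(1 + x) = ((k − ℓ)/ℓ)·max_{j∈{1,…,k}} j·λ(j); in particular, on the interval (−∞, k] the left-hand side is a strictly decreasing continuous function of x that is 0 at x = k, so the defining equation of the proportionality guarantee for λ-Thiele rules has a unique solution for each ℓ and k. -/

import Mathlib

open Finset

noncomputable def thieleScore (lam : ℝ → ℝ) {C : Type*} [DecidableEq C] {n : ℕ}
    (A : Fin n → Finset C) (W : Finset C) : ℝ :=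
  ∑ i, ∑ j ∈ Finset.range ((A i ∩ W).card), lam ((j : ℝ) + 1)

/-- The λ-Thiele rule: winning committees are the size-`k` committees of maximal λ-score. -/
def ThieleWins (lam : ℝ → ℝ) {C : Type*} [DecidableEq C] {n : ℕ}
    (A : Fin n → Finset C) (k : ℕ) (W : Finset C) : Prop :=
  W.card = k ∧ ∀ W' : Finset C, W'.card = k → thieleScore lam A W' ≤ thieleScore lam A W

/-- `max_{x ∈ {1,…,k}} x·λ(x)`. -/
noncomputable def maxXLam (lam : ℝ → ℝ) (k : ℕ) : ℝ :=
  ⨆ x : Fin k, (((x : ℕ) : ℝ) + 1) * lam (((x : ℕ) : ℝ) + 1)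

theorem thiele_guarantee_equation_unique_solution
    (lam : ℝ → ℝ) (hpos : ∀ x : ℝ, 0 < lam x)
    (hanti : Antitone lam) (hconv : ConvexOn ℝ Set.univ lam)
    (ℓ k : ℕ) (hℓ : 0 < ℓ) (hℓk : ℓ ≤ k) :
    (∃! x : ℝ, x ≤ (k : ℝ) ∧
      ((k : ℝ) - x) * lam (1 + x) = (((k : ℝ) - (ℓ : ℝ)) / (ℓ : ℝ)) * maxXLam lam k) ∧
    StrictAntiOn (fun x : ℝ => ((k : ℝ) - x) * lam (1 + x)) (Set.Iic (k : ℝ)) ∧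
    ContinuousOn (fun x : ℝ => ((k : ℝ) - x) * lam (1 + x)) (Set.Iic (k : ℝ)) ∧
    ((k : ℝ) - (k : ℝ)) * lam (1 + (k : ℝ)) = 0 := by

  have hk : 0 < k := lt_of_lt_of_le hℓ hℓk
  have hcont : Continuous lam := by
    rw [← continuousOn_univ]
    exact ConvexOn.continuousOn isOpen_univ hconv
  set f : ℝ → ℝ := fun x : ℝ => ((k : ℝ) - x) * lam (1 + x) with hf
  have hfc : Continuous f := by
    exact (continuous_const.sub continuous_id).mul
      (hcont.comp (continuous_const.add continuous_id))
  have hsa : StrictAntiOn f (Set.Iic (k : ℝ)) := by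
    intro x hx y hy hxy
    simp only [Set.mem_Iic] at hx hy
    calc ((k : ℝ) - y) * lam (1 + y) ≤ ((k : ℝ) - y) * lam (1 + x) := by
          exact mul_le_mul_of_nonneg_left (hanti (by linarith)) (by linarith)
      _ < ((k : ℝ) - x) * lam (1 + x) := by
          exact mul_lt_mul_of_pos_right (by linarith) (hpos _)
  set c : ℝ := (((k : ℝ) - (ℓ : ℝ)) / (ℓ : ℝ)) * maxXLam lam k with hcdef
  have hM : 0 ≤ maxXLam lam k := by
    refine le_ciSup_of_le (Set.Finite.bddAbove (Set.finite_range _)) ⟨0, hk⟩ ?_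
    exact mul_nonneg (by positivity) (hpos _).le
  have hc : 0 ≤ c := by
    apply mul_nonneg _ hM
    apply div_nonneg _ (Nat.cast_nonneg _)
    have : (ℓ : ℝ) ≤ (k : ℝ) := Nat.cast_le.mpr hℓk
    linarith
  have hfk : f (k : ℝ) = 0 := by simp [hf]
  set x₀ : ℝ := (k : ℝ) - c / lam (1 + (k : ℝ)) with hx₀def
  have hdiv : 0 ≤ c / lam (1 + (k : ℝ)) := div_nonneg hc (hpos _).le
  have hx₀k : x₀ ≤ (k : ℝ) := by rw [hx₀def]; linarith
  have hfx₀ : c ≤ f x₀ := by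
    have h1 : lam (1 + (k : ℝ)) ≤ lam (1 + x₀) := hanti (by linarith)
    have h2 : ((k : ℝ) - x₀) * lam (1 + (k : ℝ)) ≤ ((k : ℝ) - x₀) * lam (1 + x₀) :=
      mul_le_mul_of_nonneg_left h1 (by linarith)
    have h3 : ((k : ℝ) - x₀) * lam (1 + (k : ℝ)) = c := by
      have h4 : (k : ℝ) - x₀ = c / lam (1 + (k : ℝ)) := by rw [hx₀def]; ring
      rw [h4, div_mul_cancel₀ _ (hpos _).ne']
    calc c = ((k : ℝ) - x₀) * lam (1 + (k : ℝ)) := h3.symm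
      _ ≤ f x₀ := h2
  obtain ⟨x, hxmem, hxeq⟩ := intermediate_value_Icc' hx₀k hfc.continuousOn
    (by rw [hfk]; exact ⟨hc, hfx₀⟩ : c ∈ Set.Icc (f (k : ℝ)) (f x₀))
  refine ⟨⟨x, ⟨hxmem.2, hxeq⟩, ?_⟩, hsa, hfc.continuousOn, by simp⟩
  rintro y ⟨hy1, hy2⟩
  exact hsa.injOn hy1 hxmem.2 (hy2.trans hxeq.symm)
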